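/- Let d_x, d_z be positive natural numbers, h : ℝ^{d_x} → ℝ^{d_z} any function (an encoder), and σ > 0. For x ∈ ℝ^{d_x} let q(z|x) = (2πσ²)^{−d_z/2}·exp(−‖z − h(x)‖²/(2σ²)) be the homoscedastic Gaussian embedding density. Then for every λ ∈ [0,1] and every x_i, x_j ∈ ℝ^{d_x}, the normalized log-linear fusion of the two embedding densities is exactly the Gaussian with the interpolated mean and unchanged variance: for all z ∈ ℝ^{d_z}, q(z|x_i)^λ · q(z|x_j)^{1−λ} / (∫_{ℝ^{d_z}} q(w|x_i)^λ · q(w|x_j)^{1−λ} dw) = (2πσ²)^{−d_z/2}·exp(−‖z − (λ·h(x_i) + (1−λ)·h(x_j))‖²/(2σ²)). In particular its mean is λ·h(x_i) + (1−λ)·h(x_j), so when embedding means are propagated through the decoder during training and inference, manifold probabilistic mixup (M-ProbMix) with log-linear fusion of homoscedastic Gaussian embeddings is equivalent to manifold mixup. -/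

import Mathlib

open Real MeasureTheory

lemma mix_norm_sq {F : Type*} [NormedAddCommGroup F] [InnerProductSpace ℝ F]
    (a b z : F) (lam : ℝ) :
    lam * ‖z - a‖ ^ 2 + (1 - lam) * ‖z - b‖ ^ 2 =
      ‖z - (lam • a + (1 - lam) • b)‖ ^ 2 + lam * (1 - lam) * ‖a - b‖ ^ 2 := by
  have e : ∀ v : F, ‖v‖ ^ 2 = inner ℝ v v := fun v => (real_inner_self_eq_norm_sq v).symm
  simp only [e]
  simp only [inner_sub_left, inner_sub_right, inner_add_left, inner_add_right,
    real_inner_smul_left, real_inner_smul_right, real_inner_comm a b,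
    real_inner_comm z a, real_inner_comm z b]
  ring

/-- M-ProbMix under homoscedastic Gaussian embeddings is manifold mixup: the
normalized log-linear fusion of two homoscedastic Gaussian embedding densities is
exactly the Gaussian centered at the interpolated mean with unchanged variance. -/
theorem mProbMix_homoscedasticGaussian_eq_manifoldMixup
    (dx dz : ℕ) (hdx : 0 < dx) (hdz : 0 < dz)
    (h : EuclideanSpace ℝ (Fin dx) → EuclideanSpace ℝ (Fin dz)) (σ : ℝ) (hσ : 0 < σ)
    (q : EuclideanSpace ℝ (Fin dz) → EuclideanSpace ℝ (Fin dx) → ℝ)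
    (hq : ∀ z x, q z x = (2 * Real.pi * σ ^ 2) ^ (-(dz : ℝ) / 2) *
      Real.exp (-‖z - h x‖ ^ 2 / (2 * σ ^ 2)))
    (lam : ℝ) (hlam : lam ∈ Set.Icc (0:ℝ) 1)
    (xi xj : EuclideanSpace ℝ (Fin dx)) :
    ∀ z : EuclideanSpace ℝ (Fin dz),
      q z xi ^ lam * q z xj ^ (1 - lam) /
          (∫ w : EuclideanSpace ℝ (Fin dz), q w xi ^ lam * q w xj ^ (1 - lam)) =
        (2 * Real.pi * σ ^ 2) ^ (-(dz : ℝ) / 2) *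
          Real.exp (-‖z - (lam • h xi + (1 - lam) • h xj)‖ ^ 2 / (2 * σ ^ 2)) := by
  set a := h xi with ha
  set b := h xj with hb
  set m := lam • a + (1 - lam) • b with hm
  have hbase : (0:ℝ) < 2 * Real.pi * σ ^ 2 := by positivity
  set C : ℝ := (2 * Real.pi * σ ^ 2) ^ (-(dz : ℝ) / 2) with hC
  have hCpos : 0 < C := Real.rpow_pos_of_pos hbase _
  set K : ℝ := Real.exp (-(lam * (1 - lam) * ‖a - b‖ ^ 2) / (2 * σ ^ 2)) with hK
  have key : ∀ w : EuclideanSpace ℝ (Fin dz),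
      q w xi ^ lam * q w xj ^ (1 - lam) =
        K * (C * Real.exp (-‖w - m‖ ^ 2 / (2 * σ ^ 2))) := by
    intro w
    rw [hq, hq, Real.mul_rpow hCpos.le (Real.exp_nonneg _),
      Real.mul_rpow hCpos.le (Real.exp_nonneg _), ← Real.exp_mul, ← Real.exp_mul]
    have hCC : C ^ lam * C ^ (1 - lam) = C := by
      rw [← Real.rpow_add hCpos]; norm_num
    calc C ^ lam * Real.exp (-‖w - a‖ ^ 2 / (2 * σ ^ 2) * lam) *
          (C ^ (1 - lam) * Real.exp (-‖w - b‖ ^ 2 / (2 * σ ^ 2) * (1 - lam)))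
        = (C ^ lam * C ^ (1 - lam)) *
          Real.exp (-‖w - a‖ ^ 2 / (2 * σ ^ 2) * lam +
            -‖w - b‖ ^ 2 / (2 * σ ^ 2) * (1 - lam)) := by
          rw [Real.exp_add]; ring
      _ = K * (C * Real.exp (-‖w - m‖ ^ 2 / (2 * σ ^ 2))) := by
          have harg : -‖w - a‖ ^ 2 / (2 * σ ^ 2) * lam +
              -‖w - b‖ ^ 2 / (2 * σ ^ 2) * (1 - lam) =
              -(lam * (1 - lam) * ‖a - b‖ ^ 2) / (2 * σ ^ 2) +
                -‖w - m‖ ^ 2 / (2 * σ ^ 2) := by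
            have hσ2 : (2 * σ ^ 2) ≠ 0 := by positivity
            rw [div_mul_eq_mul_div, div_mul_eq_mul_div, ← add_div,
              ← add_div, div_eq_div_iff hσ2 hσ2]
            nlinarith [mix_norm_sq a b w lam]
          rw [hCC, harg, Real.exp_add]; ring
  have hshift : (∫ w : EuclideanSpace ℝ (Fin dz),
      Real.exp (-‖w - m‖ ^ 2 / (2 * σ ^ 2))) = (2 * Real.pi * σ ^ 2) ^ ((dz : ℝ) / 2) := by
    have h1 : ∀ w : EuclideanSpace ℝ (Fin dz),
        Real.exp (-‖w - m‖ ^ 2 / (2 * σ ^ 2)) =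
          (fun v : EuclideanSpace ℝ (Fin dz) =>
            Real.exp (-(1 / (2 * σ ^ 2)) * ‖v‖ ^ 2)) (w - m) := by
      intro w; congr 1; ring
    simp_rw [h1]
    rw [integral_sub_right_eq_self
      (fun v : EuclideanSpace ℝ (Fin dz) => Real.exp (-(1 / (2 * σ ^ 2)) * ‖v‖ ^ 2)) m]
    rw [GaussianFourier.integral_rexp_neg_mul_sq_norm (by positivity : (0:ℝ) < 1 / (2 * σ ^ 2))]
    rw [finrank_euclideanSpace_fin]
    congr 1
    field_simp
  have hint : (∫ w : EuclideanSpace ℝ (Fin dz), q w xi ^ lam * q w xj ^ (1 - lam)) = K := by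
    simp_rw [key]
    rw [integral_const_mul, integral_const_mul, hshift, hC,
      ← Real.rpow_add hbase, show -(dz:ℝ)/2 + (dz:ℝ)/2 = 0 by ring, Real.rpow_zero, mul_one]
  intro z
  rw [key z, hint, mul_div_assoc, mul_comm K, mul_div_assoc, mul_assoc,
    div_mul_cancel₀ _ (Real.exp_ne_zero _)]
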